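/- Let E be a finite-dimensional real inner product space, A : E → E a symmetric linear operator, and D ⊆ E a subspace such that ⟨A x, y⟩ = 0 for all x, y ∈ D. Then dim (ker A ∩ D) ≥ 2 dim D − dim E. -/
import Mathlib


open Module
open scoped InnerProductSpace

/-- if `A` is a symmetric operator on `E` and `⟨Ax,y⟩ = 0` for all
`x, y ∈ D`, then `dim (ker A ∩ D) ≥ 2 dim D - dim E`. -/
theorem stmt13 {E : Type*} [NormedAddCommGroup E] [InnerProductSpace ℝ E]
    [FiniteDimensional ℝ E]
    (A : E →ₗ[ℝ] E) (hAsymm : ∀ x y : E, ⟪A x, y⟫_ℝ = ⟪x, A y⟫_ℝ)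
    (D : Submodule ℝ E) (hD : ∀ x ∈ D, ∀ y ∈ D, ⟪A x, y⟫_ℝ = 0) :
    (finrank ℝ ↥(LinearMap.ker A ⊓ D) : ℤ) ≥
      2 * (finrank ℝ ↥D : ℤ) - (finrank ℝ E : ℤ) := by
  -- A maps D into Dᗮ
  have hmem : ∀ x : D, A x ∈ Dᗮ := by
    intro x
    rw [Submodule.mem_orthogonal]
    intro y hy
    rw [real_inner_comm]
    exact hD x x.2 y hy
  set f : D →ₗ[ℝ] Dᗮ := (A.domRestrict D).codRestrict Dᗮ hmem with hf
  have hker : LinearMap.ker f = Submodule.comap D.subtype (LinearMap.ker A) := by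
    ext x
    simp [hf, LinearMap.mem_ker, LinearMap.codRestrict, LinearMap.domRestrict,
      Subtype.ext_iff]
  have h1 : finrank ℝ (LinearMap.range f) + finrank ℝ (LinearMap.ker f)
      = finrank ℝ D := LinearMap.finrank_range_add_finrank_ker f
  have h2 : finrank ℝ (LinearMap.ker f) = finrank ℝ ↥(LinearMap.ker A ⊓ D) := by
    rw [hker]
    have hmap : (Submodule.comap D.subtype (LinearMap.ker A)).map D.subtype
        = LinearMap.ker A ⊓ D := by rw [Submodule.map_comap_subtype, inf_comm]
    rw [← hmap]
    exact (Submodule.equivMapOfInjective D.subtype D.injective_subtype _).finrank_eq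
  have h3 : finrank ℝ (LinearMap.range f) ≤ finrank ℝ Dᗮ :=
    Submodule.finrank_le _
  have h4 : finrank ℝ D + finrank ℝ Dᗮ = finrank ℝ E :=
    Submodule.finrank_add_finrank_orthogonal D
  omega
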